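/- (Serdyukov–Christofides bound) Let V be a finite vertex set with |V| ≥ 3 and ρ a symmetric positive weight function on pairs satisfying the triangle inequality. Let T be a minimum spanning tree, X₁ the odd-degree vertices of T, and M a minimum-weight perfect matching on X₁. Then any Hamiltonian cycle obtained by shortcutting an Eulerian circuit of the multigraph T ∪ M has weight strictly less than 3/2 times the minimum Hamiltonian cycle weight. -/

import Mathlib

open scoped Classical

/-- Cyclic weight of a closed tour given by the vertex list `l`:
the sum of `ρ` over consecutive pairs, including the pair closing the cycle. -/
def cycWeight {V : Type*} (ρ : V → V → ℝ) (l : List V) : ℝ :=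
  ((l.zip (l.rotate 1)).map fun p => ρ p.1 p.2).sum

/-- The (cyclic) list of edges of a closed tour given by the vertex list `l`. -/
def cycEdges {V : Type*} (l : List V) : List (Sym2 V) :=
  (l.zip (l.rotate 1)).map (Sym2.mk).uncurry

/-- The list of endpoints of a list of matching pairs. -/
def matchVerts {V : Type*} (M : List (V × V)) : List V :=
  M.flatMap fun p => [p.1, p.2]

/-- `M` is a perfect matching on the vertex set `X`: a partition of `X` into pairs. -/
def IsPM {V : Type*} [DecidableEq V] (X : Finset V) (M : List (V × V)) : Prop :=
  (matchVerts M).Nodup ∧ (matchVerts M).toFinset = X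

/-- The weight of a matching: the sum of weights of its pairs. -/
def mWeight {V : Type*} (ρ : V → V → ℝ) (M : List (V × V)) : ℝ :=
  (M.map fun p => ρ p.1 p.2).sum

/-- Total edge weight of a graph. -/
noncomputable def gWeight {V : Type*} [Fintype V] (f : Sym2 V → ℝ) (T : SimpleGraph V) : ℝ :=
  ∑ e ∈ T.edgeSet.toFinset, f e

/-- The weight of a walk in the graph `G` with edge weights `f`
(edges are counted with multiplicity). -/
def walkWeight {V : Type*} (G : SimpleGraph V) (f : Sym2 V → ℝ) {u v : V} (p : G.Walk u v) : ℝ :=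
  (p.edges.map f).sum

/-- Shortest-path distance between `i` and `j` (metric closure of `G`). -/
noncomputable def sdist {V : Type*} (G : SimpleGraph V) (f : Sym2 V → ℝ) (i j : V) : ℝ :=
  sInf {x | ∃ p : G.Walk i j, x = walkWeight G f p}

namespace SC

variable {V : Type*} {ρ : V → V → ℝ}

/-- The weight of an (open) path given by a vertex list. -/
def pw (ρ : V → V → ℝ) : List V → ℝ
  | a :: b :: t => ρ a b + pw ρ (b :: t)
  | _ => 0

/-- Pair up consecutive elements of a list. -/
def pairUp : List V → List (V × V)
  | a :: b :: t => (a, b) :: pairUp t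
  | _ => []

/-- The list of consecutive edges of a path given by a vertex list. -/
def pe (l : List V) : List (Sym2 V) := (l.zip l.tail).map (Sym2.mk).uncurry

@[simp] lemma pw_nil : pw ρ [] = 0 := rfl
@[simp] lemma pw_single (a : V) : pw ρ [a] = 0 := rfl
@[simp] lemma pw_cons_cons (a b : V) (t : List V) :
    pw ρ (a :: b :: t) = ρ a b + pw ρ (b :: t) := rfl

lemma pw_triangle_head (htri : ∀ i j k, ρ i j ≤ ρ i k + ρ k j)
    (a c : V) : ∀ (t : List V), t ≠ [] → pw ρ (a :: t) ≤ ρ a c + pw ρ (c :: t)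
  | [], h => absurd rfl h
  | u :: t', _ => by
      simp only [pw_cons_cons]
      have := htri a u c
      linarith

lemma pw_sublist (htri : ∀ i j k, ρ i j ≤ ρ i k + ρ k j) {s l : List V} (h : s.Sublist l) :
    ∀ a b, pw ρ (a :: (s ++ [b])) ≤ pw ρ (a :: (l ++ [b])) := by
  induction h with
  | slnil => intro a b; exact le_refl _
  | @cons s l c h ih =>
      intro a b
      calc pw ρ (a :: (s ++ [b])) ≤ ρ a c + pw ρ (c :: (s ++ [b])) :=
            pw_triangle_head htri a c _ (by simp)
        _ ≤ ρ a c + pw ρ (c :: (l ++ [b])) := by linarith [ih c b]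
        _ = pw ρ (a :: ((c :: l) ++ [b])) := by simp
  | @cons_cons s l c h ih =>
      intro a b
      have := ih c b
      simp only [List.cons_append, pw_cons_cons]
      linarith

lemma pw_append_last : ∀ (l : List V) (h : l ≠ []) (a : V),
    pw ρ (l ++ [a]) = pw ρ l + ρ (l.getLast h) a
  | [x], _, a => by simp
  | x :: y :: t, _, a => by
      have h1 := pw_append_last (y :: t) (by simp) a
      have h2 : (x :: y :: t) ++ [a] = x :: ((y :: t) ++ [a]) := by simp
      have h3 : x :: ((y :: t) ++ [a]) = x :: y :: (t ++ [a]) := by simp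
      rw [h2, h3, show pw ρ (x :: y :: (t ++ [a])) = ρ x y + pw ρ (y :: (t ++ [a])) from rfl,
        show (y :: (t ++ [a])) = (y :: t) ++ [a] by simp, h1,
        List.getLast_cons_cons, pw_cons_cons]
      ring

lemma zipsum : ∀ (t : List V) (c a : V),
    (((c :: t).zip (t ++ [a])).map fun p => ρ p.1 p.2).sum = pw ρ (c :: (t ++ [a]))
  | [], c, a => by simp
  | b :: t', c, a => by
      have := zipsum t' b a
      simp only [List.cons_append, List.zip_cons_cons, List.map_cons, List.sum_cons,
        pw_cons_cons] at *
      rw [this]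

lemma cycWeight_cons (a : V) (t : List V) :
    cycWeight ρ (a :: t) = pw ρ (a :: (t ++ [a])) := by
  have h1 : (a :: t).rotate 1 = t ++ [a] := by
    rw [show (1 : ℕ) = 0 + 1 from rfl, List.rotate_cons_succ, List.rotate_zero]
  rw [cycWeight, h1, zipsum]

lemma getLast_snoc' : ∀ (b : V) (t : List V) (a : V) (h : b :: (t ++ [a]) ≠ []),
    (b :: (t ++ [a])).getLast h = a
  | b, [], a, _ => by simp
  | b, c :: t', a, _ => by
      show (b :: c :: (t' ++ [a])).getLast (by simp) = a
      rw [List.getLast_cons_cons]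
      exact getLast_snoc' c t' a _

lemma cycWeight_rot1 (a : V) (t : List V) :
    cycWeight ρ (a :: t) = cycWeight ρ (t ++ [a]) := by
  cases t with
  | nil => simp
  | cons b t' =>
      rw [cycWeight_cons, show ((b :: t') ++ [a]) = b :: (t' ++ [a]) by simp,
        cycWeight_cons, pw_cons_cons,
        show (b :: (t' ++ [a] ++ [b])) = (b :: (t' ++ [a])) ++ [b] by simp,
        pw_append_last (b :: (t' ++ [a])) (by simp) b]
      rw [getLast_snoc']
      ring

lemma cycWeight_rot : ∀ (l₁ : List V) (x : V) (l₂ : List V),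
    cycWeight ρ (l₁ ++ x :: l₂) = cycWeight ρ (x :: (l₂ ++ l₁))
  | [], x, l₂ => by simp
  | a :: l₁, x, l₂ => by
      rw [show (a :: l₁) ++ x :: l₂ = a :: (l₁ ++ x :: l₂) by simp, cycWeight_rot1,
        show (l₁ ++ x :: l₂) ++ [a] = l₁ ++ x :: (l₂ ++ [a]) by simp,
        cycWeight_rot l₁ x (l₂ ++ [a]),
        show (l₂ ++ [a]) ++ l₁ = l₂ ++ (a :: l₁) by simp]

lemma cycWeight_sublist (htri : ∀ i j k, ρ i j ≤ ρ i k + ρ k j) {s l : List V}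
    (h : s.Sublist l) (hs : s ≠ []) : cycWeight ρ s ≤ cycWeight ρ l := by
  obtain ⟨x, s', rfl⟩ : ∃ x s', s = x :: s' := by
    cases s with
    | nil => exact absurd rfl hs
    | cons x s' => exact ⟨x, s', rfl⟩
  rw [List.cons_sublist_iff] at h
  obtain ⟨r₁, r₂, rfl, hx, hs'⟩ := h
  obtain ⟨u, v, rfl⟩ := List.append_of_mem hx
  have hsub : s'.Sublist ((v ++ r₂) ++ u) := by
    refine (hs'.trans ?_).trans (List.sublist_append_left _ _)
    exact List.sublist_append_right _ _
  rw [show (u ++ x :: v) ++ r₂ = u ++ x :: (v ++ r₂) by simp, cycWeight_rot,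
    cycWeight_cons, cycWeight_cons]
  exact pw_sublist htri hsub x x

lemma pw_nonneg (hpos : ∀ i j, i ≠ j → 0 < ρ i j) :
    ∀ (m : List V), m.Chain' Ne → 0 ≤ pw ρ m
  | [], _ => le_of_eq pw_nil.symm
  | [a], _ => le_of_eq (pw_single a).symm
  | a :: b :: t, h => by
      unfold List.Chain' at h
      rw [List.isChain_cons_cons] at h
      have h1 := pw_nonneg hpos (b :: t) h.2
      have h2 := hpos a b h.1
      rw [pw_cons_cons]
      linarith

@[simp] lemma pairUp_nil : (pairUp ([] : List V)) = [] := rfl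
@[simp] lemma pairUp_single (a : V) : pairUp [a] = [] := rfl
@[simp] lemma pairUp_cons_cons (a b : V) (t : List V) :
    pairUp (a :: b :: t) = (a, b) :: pairUp t := rfl

@[simp] lemma matchVerts_nil : matchVerts ([] : List (V × V)) = [] := rfl
@[simp] lemma matchVerts_cons (p : V × V) (M : List (V × V)) :
    matchVerts (p :: M) = p.1 :: p.2 :: matchVerts M := rfl

@[simp] lemma mWeight_nil : mWeight ρ [] = 0 := rfl
@[simp] lemma mWeight_cons (p : V × V) (M : List (V × V)) :
    mWeight ρ (p :: M) = ρ p.1 p.2 + mWeight ρ M := by simp [mWeight]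

lemma matchVerts_length : ∀ (M : List (V × V)), (matchVerts M).length = 2 * M.length
  | [] => rfl
  | p :: M => by simp [matchVerts_length M]; ring

lemma matchVerts_pairUp : ∀ (t : List V), Even t.length → matchVerts (pairUp t) = t
  | [], _ => rfl
  | [a], h => by simp at h
  | a :: b :: t, h => by
      have ht : Even t.length := by
        simpa [Nat.even_add_one, parity_simps] using h
      simp [matchVerts_pairUp t ht]

lemma pair_split_aux : ∀ (t : List V), Even t.length → ∀ (y x : V),
    mWeight ρ (pairUp t) + mWeight ρ (pairUp (y :: (t ++ [x]))) = pw ρ (y :: (t ++ [x]))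
  | [], _, y, x => by simp [pw_cons_cons, pw_single]
  | [u], h, _, _ => by simp at h
  | u :: v :: t', h, y, x => by
      have ht : Even t'.length := by simpa [Nat.even_add_one, parity_simps] using h
      have ih := pair_split_aux t' ht v x
      have e1 : (u :: v :: t') ++ [x] = u :: v :: (t' ++ [x]) := by simp
      rw [pairUp_cons_cons, mWeight_cons, e1,
        show y :: u :: v :: (t' ++ [x]) = y :: u :: (v :: (t' ++ [x])) from rfl,
        show pairUp (y :: u :: (v :: (t' ++ [x]))) = (y, u) :: pairUp (v :: (t' ++ [x])) from rfl,
        mWeight_cons, pw_cons_cons, pw_cons_cons]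
      linarith

lemma pair_split (s : List V) (hs : s ≠ []) (he : Even s.length) :
    mWeight ρ (pairUp s) + mWeight ρ (pairUp (s.rotate 1)) = cycWeight ρ s := by
  obtain ⟨x, r, rfl⟩ : ∃ x r, s = x :: r := by
    cases s with
    | nil => exact absurd rfl hs
    | cons x r => exact ⟨x, r, rfl⟩
  obtain ⟨y, t, rfl⟩ : ∃ y t, r = y :: t := by
    cases r with
    | nil => simp at he
    | cons y t => exact ⟨y, t, rfl⟩
  have ht : Even t.length := by simpa [Nat.even_add_one, parity_simps] using he
  have hrot : (x :: y :: t).rotate 1 = (y :: t) ++ [x] := by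
    rw [show (1 : ℕ) = 0 + 1 from rfl, List.rotate_cons_succ, List.rotate_zero]
  rw [hrot, cycWeight_cons, pairUp_cons_cons, mWeight_cons,
    show (y :: t) ++ [x] = y :: (t ++ [x]) by simp,
    pw_cons_cons, ← pair_split_aux t ht y x]
  ring

@[simp] lemma pe_nil : pe ([] : List V) = [] := rfl
@[simp] lemma pe_single (a : V) : pe [a] = [] := rfl
@[simp] lemma pe_cons_cons (a b : V) (t : List V) :
    pe (a :: b :: t) = s(a, b) :: pe (b :: t) := rfl

lemma mem_pe {l : List V} {e : Sym2 V} (he : e ∈ pe l) :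
    ∃ i : ℕ, ∃ h : i + 1 < l.length, e = s(l[i], l[i+1]) := by
  rw [pe, List.mem_map] at he
  obtain ⟨p, hp, rfl⟩ := he
  rw [List.mem_iff_getElem] at hp
  obtain ⟨i, hi, hp⟩ := hp
  have hlen : i + 1 < l.length := by
    have h2 := hi
    rw [List.length_zip, List.length_tail] at h2
    omega
  refine ⟨i, hlen, ?_⟩
  rw [← hp, List.getElem_zip, List.getElem_tail, Function.uncurry_apply_pair]

lemma mem_of_mem_pe {l : List V} {e : Sym2 V} (he : e ∈ pe l) {x : V} (hx : x ∈ e) :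
    x ∈ l := by
  obtain ⟨i, hi, rfl⟩ := mem_pe he
  rcases Sym2.mem_iff.mp hx with rfl | rfl
  · exact List.getElem_mem _
  · exact List.getElem_mem _

lemma pe_nodup : ∀ {l : List V}, l.Nodup → (pe l).Nodup
  | [], _ => List.nodup_nil
  | [a], _ => List.nodup_nil
  | a :: b :: t, h => by
      rw [pe_cons_cons, List.nodup_cons]
      refine ⟨fun hmem => ?_, pe_nodup (List.nodup_cons.mp h).2⟩
      have : a ∈ b :: t := mem_of_mem_pe hmem (Sym2.mem_mk_left a b)
      exact (List.nodup_cons.mp h).1 this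

lemma pe_sum (hsym : ∀ i j, ρ i j = ρ j i) :
    ∀ (l : List V), ((pe l).map (Sym2.lift ⟨ρ, hsym⟩)).sum = pw ρ l
  | [] => by simp
  | [a] => by simp
  | a :: b :: t => by
      rw [pe_cons_cons, List.map_cons, List.sum_cons, pe_sum hsym (b :: t), pw_cons_cons,
        Sym2.lift_mk]

lemma pe_no_diag {l : List V} (hn : l.Nodup) {e : Sym2 V} (he : e ∈ pe l) : ¬e.IsDiag := by
  obtain ⟨i, hi, rfl⟩ := mem_pe he
  rw [Sym2.mk_isDiag_iff]
  intro h
  have := (List.Nodup.getElem_inj_iff hn).mp h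
  omega

lemma reachable_invariant {G' : SimpleGraph V} {P : V → Prop}
    (h : ∀ x y, G'.Adj x y → (P x ↔ P y)) {u v : V} (hr : G'.Reachable u v) :
    P u ↔ P v := by
  obtain ⟨p⟩ := hr
  induction p with
  | nil => exact Iff.rfl
  | cons hadj p ih => exact (h _ _ hadj).trans ih

lemma reach_head : ∀ (l : List V) (a v : V), v ∈ a :: l → List.Chain' Ne (a :: l) →
    (SimpleGraph.fromEdgeSet {e | e ∈ pe (a :: l)}).Reachable a v
  | [], a, v, hv, _ => by
      simp at hv
      subst hv
      exact SimpleGraph.Reachable.refl _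
  | b :: t, a, v, hv, hc => by
      rcases List.mem_cons.mp hv with rfl | hv'
      · exact SimpleGraph.Reachable.refl _
      · have hc' := List.isChain_cons_cons.mp hc
        have hmono : (SimpleGraph.fromEdgeSet {e | e ∈ pe (b :: t)} : SimpleGraph V) ≤
            SimpleGraph.fromEdgeSet {e | e ∈ pe (a :: b :: t)} := by
          apply SimpleGraph.fromEdgeSet_mono
          intro e he
          rw [Set.mem_setOf_eq] at *
          rw [pe_cons_cons]
          exact List.mem_cons_of_mem _ he
        have hb := (reach_head t b v hv' hc'.2).mono hmono
        have hadj : (SimpleGraph.fromEdgeSet {e | e ∈ pe (a :: b :: t)}).Adj a b := by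
          rw [SimpleGraph.fromEdgeSet_adj]
          exact ⟨by rw [Set.mem_setOf_eq, pe_cons_cons]; exact List.mem_cons_self, hc'.1⟩
        exact hadj.reachable.trans hb

lemma pathGraph_isTree {l : List V} (hn : l.Nodup) (hne : l ≠ [])
    (hu : ∀ v : V, v ∈ l) : (SimpleGraph.fromEdgeSet {e | e ∈ pe l}).IsTree := by
  obtain ⟨a, t, rfl⟩ : ∃ a t, l = a :: t := by
    cases l with
    | nil => exact absurd rfl hne
    | cons a t => exact ⟨a, t, rfl⟩
  have hchain : List.Chain' Ne (a :: t) := hn.isChain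
  constructor
  · haveI : Nonempty V := ⟨a⟩
    refine ⟨fun u v => ?_⟩
    exact (reach_head t a u (hu u) hchain).symm.trans (reach_head t a v (hu v) hchain)
  · rw [SimpleGraph.isAcyclic_iff_forall_adj_isBridge]
    intro v w hvw
    have hadj := hvw
    rw [SimpleGraph.fromEdgeSet_adj] at hadj
    obtain ⟨hmem, hvwne⟩ := hadj
    rw [Set.mem_setOf_eq] at hmem
    obtain ⟨i, hi, hei⟩ := mem_pe hmem
    rw [SimpleGraph.isBridge_iff]
    refine fun hreach => ?_
    set l := a :: t
    set P : V → Prop := fun x => l.idxOf x ≤ i with hP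
    have key : ∀ x y,
        ((SimpleGraph.fromEdgeSet {e | e ∈ pe l}) \ SimpleGraph.fromEdgeSet {s(v,w)}).Adj x y →
        (P x ↔ P y) := by
      intro x y hxy
      rw [SimpleGraph.sdiff_adj, SimpleGraph.fromEdgeSet_adj, SimpleGraph.fromEdgeSet_adj] at hxy
      obtain ⟨⟨hxy1, hxy2⟩, hxy3⟩ := hxy
      have hne2 : s(x,y) ≠ s(v,w) := fun h => hxy3 ⟨by simp [h], hxy2⟩
      rw [Set.mem_setOf_eq] at hxy1
      obtain ⟨j, hj, hej⟩ := mem_pe hxy1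
      have hji : j ≠ i := by
        intro h
        subst h
        exact hne2 (hej.trans hei.symm)
      have idx1 : l.idxOf (l[j]'(by omega)) = j := List.Nodup.idxOf_getElem hn j (by omega)
      have idx2 : l.idxOf (l[j+1]'hj) = j + 1 := List.Nodup.idxOf_getElem hn (j+1) hj
      rcases Sym2.eq_iff.mp hej with ⟨hx, hy⟩ | ⟨hx, hy⟩ <;>
        · rw [hP]
          simp only [hx, hy, idx1, idx2]
          omega
    have hPvw := reachable_invariant key hreach
    have idx1 : l.idxOf (l[i]'(by omega)) = i := List.Nodup.idxOf_getElem hn i (by omega)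
    have idx2 : l.idxOf (l[i+1]'hi) = i + 1 := List.Nodup.idxOf_getElem hn (i+1) hi
    have idx1' : List.idxOf ((a :: t)[i]'(Nat.lt_of_succ_lt hi)) l = i := idx1
    have idx2' : List.idxOf ((a :: t)[i+1]'hi) l = i + 1 := idx2
    rcases Sym2.eq_iff.mp hei with ⟨hx, hy⟩ | ⟨hx, hy⟩ <;>
      · rw [hP] at hPvw
        simp only [hx, hy, idx1, idx2, idx1', idx2'] at hPvw
        omega

lemma gWeight_path [Fintype V] (hsym : ∀ i j, ρ i j = ρ j i) {l : List V} (hn : l.Nodup) :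
    gWeight (Sym2.lift ⟨ρ, hsym⟩) (SimpleGraph.fromEdgeSet {e | e ∈ pe l}) = pw ρ l := by
  have hset : (SimpleGraph.fromEdgeSet {e | e ∈ pe l}).edgeSet = {e | e ∈ pe l} := by
    rw [SimpleGraph.edgeSet_fromEdgeSet]
    ext e
    simp only [Set.mem_diff, Set.mem_setOf_eq]
    exact ⟨fun h => h.1, fun h => ⟨h, pe_no_diag hn h⟩⟩
  have hfin : (SimpleGraph.fromEdgeSet {e | e ∈ pe l}).edgeSet.toFinset = (pe l).toFinset := by
    ext e
    rw [Set.mem_toFinset, hset, Set.mem_setOf_eq, List.mem_toFinset]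
  have h2 : ∑ e ∈ (pe l).toFinset, Sym2.lift ⟨ρ, hsym⟩ e = pw ρ l := by
    rw [List.sum_toFinset _ (pe_nodup hn), pe_sum hsym]
  rw [gWeight]
  have h3 := (Finset.sum_congr hfin fun _ _ => rfl).trans h2
  convert h3 using 3

end SC

/-- Serdyukov–Christofides bound: any Hamiltonian cycle obtained by
shortcutting an Eulerian circuit of the multigraph `T ∪ M`, where `T` is a
minimum spanning tree and `M` a minimum perfect matching on the odd-degree
vertices of `T`, has weight strictly less than `3/2` times the minimum
Hamiltonian cycle weight. -/
theorem serdyukov_christofides {V : Type*} [Fintype V] [DecidableEq V]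
    (ρ : V → V → ℝ) (hpos : ∀ i j, i ≠ j → 0 < ρ i j) (hsym : ∀ i j, ρ i j = ρ j i)
    (htri : ∀ i j k, ρ i j ≤ ρ i k + ρ k j) (hV : 3 ≤ Fintype.card V)
    -- T is a minimum spanning tree
    (T : SimpleGraph V) (hT : T.IsTree)
    (hTmin : ∀ T' : SimpleGraph V, T'.IsTree →
      gWeight (Sym2.lift ⟨ρ, hsym⟩) T ≤ gWeight (Sym2.lift ⟨ρ, hsym⟩) T')
    -- M is a minimum perfect matching on the odd-degree vertices X₁ of T
    (M : List (V × V))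
    (hM : IsPM (Finset.univ.filter fun v => Odd (T.degree v)) M)
    (hMmin : ∀ M' : List (V × V),
      IsPM (Finset.univ.filter fun v => Odd (T.degree v)) M' →
        mWeight ρ M ≤ mWeight ρ M')
    -- w is an Eulerian circuit of the multigraph T ∪ M
    (w : List V)
    (hw : (↑(cycEdges w) : Multiset (Sym2 V)) = T.edgeSet.toFinset.val + ↑(M.map (Sym2.mk).uncurry))
    -- L* is a Hamiltonian cycle obtained from w by shortcutting
    (Lstar : List V) (hsub : Lstar.Sublist w) (hLstar : Lstar.Nodup)
    (hLstarspan : Lstar.toFinset = Finset.univ)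
    -- L₀ is a minimum Hamiltonian cycle
    (L₀ : List V) (hL₀ : L₀.Nodup) (hL₀span : L₀.toFinset = Finset.univ)
    (hL₀min : ∀ L : List V, L.Nodup → L.toFinset = Finset.univ →
      cycWeight ρ L₀ ≤ cycWeight ρ L) :
    cycWeight ρ Lstar < 3 / 2 * cycWeight ρ L₀ := by
  classical
  set f := (Sym2.lift ⟨ρ, hsym⟩ : Sym2 V → ℝ) with hf
  haveI hVne : Nonempty V := Fintype.card_pos_iff.mp (by omega)
  -- structure of L₀
  have hL₀len : L₀.length = Fintype.card V := by
    rw [← List.toFinset_card_of_nodup hL₀, hL₀span, Finset.card_univ]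
  obtain ⟨a, t, rfl⟩ : ∃ a t, L₀ = a :: t := by
    cases L₀ with
    | nil => rw [← hL₀len] at hV; simp at hV
    | cons a t => exact ⟨a, t, rfl⟩
  have htne : t ≠ [] := by
    intro h
    subst h
    rw [← hL₀len] at hV
    simp at hV
  have hlast_mem : (a :: t).getLast (by simp) ∈ t := by
    rw [List.getLast_cons htne]
    exact List.getLast_mem htne
  have hlast_ne : (a :: t).getLast (by simp) ≠ a := by
    intro h
    rw [h] at hlast_mem
    exact (List.nodup_cons.mp hL₀).1 hlast_mem
  have hcycL₀ : cycWeight ρ (a :: t) =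
      SC.pw ρ (a :: t) + ρ ((a :: t).getLast (by simp)) a := by
    rw [SC.cycWeight_cons, show a :: (t ++ [a]) = (a :: t) ++ [a] by simp,
      SC.pw_append_last (a :: t) (by simp) a]
  have hc_pos : 0 < ρ ((a :: t).getLast (by simp)) a := hpos _ _ hlast_ne
  have hchainL₀ : List.Chain' Ne (a :: t) := hL₀.isChain
  have hcyc_nonneg : 0 ≤ cycWeight ρ (a :: t) := by
    rw [SC.cycWeight_cons]
    apply SC.pw_nonneg hpos
    unfold List.Chain'
    rw [show a :: (t ++ [a]) = (a :: t) ++ [a] by simp, List.isChain_append]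
    refine ⟨hchainL₀, List.isChain_singleton a, fun x hx y hy => ?_⟩
    rw [List.getLast?_eq_getLast_of_ne_nil (by simp), Option.mem_some_iff] at hx
    simp only [List.head?_cons, Option.mem_def, Option.some.injEq] at hy
    subst hy
    rw [← hx]
    exact hlast_ne
  -- Step 1 : weight of the shortcut tour is at most the weight of the Euler tour
  have hLstar_ne : Lstar ≠ [] := by
    intro h
    rw [h] at hLstarspan
    simp only [List.toFinset_nil] at hLstarspan
    exact Finset.univ_nonempty.ne_empty hLstarspan.symm
  have hmk : ∀ p : V × V, f ((Sym2.mk).uncurry p) = ρ p.1 p.2 := by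
    rintro ⟨x, y⟩
    simp [hf]
  have hwsum : cycWeight ρ w = gWeight f T + mWeight ρ M := by
    have h1 : cycWeight ρ w = ((cycEdges w).map f).sum := by
      rw [cycWeight, cycEdges, List.map_map]
      congr 1
    have h2 := congrArg (fun m : Multiset (Sym2 V) => (m.map f).sum) hw
    simp only [Multiset.map_coe, Multiset.sum_coe, Multiset.map_add, Multiset.sum_add] at h2
    have h3 : (Multiset.map f T.edgeSet.toFinset.val).sum = gWeight f T := by
      rw [gWeight]
      rfl
    have h4 : ((M.map (Sym2.mk).uncurry).map f).sum = mWeight ρ M := by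
      rw [List.map_map, mWeight]
      congr 1
    rw [h1, h2, h3, ← h4]
  have hstep1 : cycWeight ρ Lstar ≤ gWeight f T + mWeight ρ M := by
    rw [← hwsum]
    exact SC.cycWeight_sublist htri hsub hLstar_ne
  -- Step 2 : the MST weighs less than the optimal tour
  have hT' : (SimpleGraph.fromEdgeSet {e | e ∈ SC.pe (a :: t)}).IsTree :=
    SC.pathGraph_isTree hL₀ (by simp)
      (fun v => by rw [← List.mem_toFinset, hL₀span]; exact Finset.mem_univ v)
  have hstep2 : gWeight f T ≤ SC.pw ρ (a :: t) := by
    rw [hf, ← SC.gWeight_path hsym hL₀]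
    exact hTmin _ hT'
  -- Step 3 : twice the matching weight is at most the optimal tour
  set X₁ := (Finset.univ.filter fun v => Odd (T.degree v)) with hX₁
  set s := List.filter (fun v => decide (v ∈ X₁)) (a :: t) with hsdef
  have hs_sub : s.Sublist (a :: t) := List.filter_sublist
  have hs_nodup : s.Nodup := hL₀.filter _
  have hs_fin : s.toFinset = X₁ := by
    ext x
    simp only [hsdef, List.mem_toFinset, List.mem_filter, decide_eq_true_eq]
    constructor
    · rintro ⟨-, h⟩
      exact h
    · intro h
      exact ⟨by rw [← List.mem_toFinset, hL₀span]; exact Finset.mem_univ x, h⟩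
  have hstep3 : 2 * mWeight ρ M ≤ cycWeight ρ (a :: t) := by
    rcases eq_or_ne s [] with hse | hse
    · have hX₁e : X₁ = ∅ := by rw [← hs_fin, hse]; rfl
      have hMV : matchVerts M = [] := by
        have h5 := hM.2
        rw [hX₁e] at h5
        exact (List.toFinset_eq_empty_iff _).mp h5
      have hMnil : M = [] := by
        cases M with
        | nil => rfl
        | cons p M' => simp [matchVerts] at hMV
      rw [hMnil]
      simpa using hcyc_nonneg
    · have hslen : s.length = 2 * M.length := by
        rw [← List.toFinset_card_of_nodup hs_nodup, hs_fin, ← hM.2,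
          List.toFinset_card_of_nodup hM.1, SC.matchVerts_length]
      have hse' : Even s.length := by rw [hslen]; exact even_two_mul _
      have hM₁ : IsPM X₁ (SC.pairUp s) := by
        rw [IsPM, SC.matchVerts_pairUp s hse']
        exact ⟨hs_nodup, hs_fin⟩
      have hM₂ : IsPM X₁ (SC.pairUp (s.rotate 1)) := by
        rw [IsPM, SC.matchVerts_pairUp _ (by rwa [List.length_rotate])]
        refine ⟨List.nodup_rotate.mpr hs_nodup, ?_⟩
        rw [List.toFinset_eq_of_perm _ _ (List.rotate_perm s 1)]
        exact hs_fin
      have h1 := hMmin _ hM₁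
      have h2 := hMmin _ hM₂
      have h3 := SC.pair_split (ρ := ρ) s hse hse'
      have h4 := SC.cycWeight_sublist htri hs_sub hse
      linarith
  linarith [hstep1, hstep2, hstep3, hc_pos, hcycL₀]
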